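/- Let s be an odd prime, b ≥ 2 with gcd(s, b−1) = 1, and N = (b^s − 1)/(b − 1). Then in Z_N, for G = ⟨b⟩, every element of G+1 = {b^i + 1 : 0 ≤ i < s} is invertible in Z_N, and hence there exists an (N, (N−1)/(2s) + 1, 2s−1) zero-difference balanced function on (Z_N, +). -/

import Mathlib

/-- `f : A → B` is an `(N, m, λ)` zero-difference balanced function. -/
def IsZDB {A B : Type*} [AddGroup A] (f : A → B) (N m lam : ℕ) : Prop :=
  Nat.card A = N ∧ Set.ncard (Set.range f) = m ∧
    ∀ a : A, a ≠ 0 → Set.ncard {x : A | f (x + a) = f x} = lam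

lemma repunit_geom {s b : ℕ} (hb : 2 ≤ b) :
    (b - 1) * ∑ i ∈ Finset.range s, b ^ i = b ^ s - 1 := by
  have hg := geom_sum_mul (b : ℤ) s
  have h1 : 1 ≤ b ^ s := Nat.one_le_pow _ _ (by omega)
  apply (Nat.cast_inj (R := ℤ)).mp
  push_cast [Nat.cast_sub (by omega : 1 ≤ b), Nat.cast_sub h1]
  linarith [hg]

lemma repunit_mul {s b : ℕ} (hb : 2 ≤ b) :
    (b - 1) * ((b ^ s - 1) / (b - 1)) = b ^ s - 1 :=
  Nat.mul_div_cancel' (by simpa using Nat.sub_dvd_pow_sub_pow b 1 s)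

lemma repunit_sum {s b : ℕ} (hb : 2 ≤ b) :
    (b ^ s - 1) / (b - 1) = ∑ i ∈ Finset.range s, b ^ i :=
  Nat.eq_of_mul_eq_mul_left (by omega : 0 < b - 1)
    ((repunit_mul hb).trans (repunit_geom hb).symm)

lemma key_order {s b : ℕ} (hs : Nat.Prime s) (hsodd : Odd s) (hb : 2 ≤ b)
    (hgcd : Nat.gcd s (b - 1) = 1) {p : ℕ} (pp : p.Prime)
    (hpN : p ∣ (b ^ s - 1) / (b - 1)) :
    orderOf (b : ZMod p) = s ∧ p ≠ 2 := by
  haveI := Fact.mk pp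
  have hs3 : 3 ≤ s := by
    have h2 := hs.two_le
    rcases Nat.lt_or_ge s 3 with h | h
    · interval_cases s
      · exact absurd hsodd (by decide)
    · exact h
  have hb1 : 1 ≤ b ^ s := Nat.one_le_pow _ _ (by omega)
  have hNdvd : (b ^ s - 1) / (b - 1) ∣ b ^ s - 1 :=
    Nat.div_dvd_of_dvd (by simpa using Nat.sub_dvd_pow_sub_pow b 1 s)
  have hp1 : p ∣ b ^ s - 1 := hpN.trans hNdvd
  have hcast : (b : ZMod p) ^ s = 1 := by
    have h0 : ((b ^ s - 1 : ℕ) : ZMod p) = 0 :=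
      (ZMod.natCast_eq_zero_iff _ _).mpr hp1
    rw [Nat.cast_sub hb1] at h0
    push_cast at h0
    exact sub_eq_zero.mp h0
  have hbne : (b : ZMod p) ≠ 0 := by
    intro h0
    rw [h0, zero_pow (by omega : s ≠ 0)] at hcast
    exact zero_ne_one hcast
  have hdvd : orderOf (b : ZMod p) ∣ s := orderOf_dvd_of_pow_eq_one hcast
  have hord : orderOf (b : ZMod p) = s := by
    rcases Nat.Prime.eq_one_or_self_of_dvd hs _ hdvd with h1 | h
    · exfalso
      have hb1' : (b : ZMod p) = 1 := orderOf_eq_one_iff.mp h1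
      have hpb1 : p ∣ b - 1 := by
        have h0 : ((b - 1 : ℕ) : ZMod p) = 0 := by
          rw [Nat.cast_sub (by omega : 1 ≤ b)]
          simp [hb1']
        exact (ZMod.natCast_eq_zero_iff _ _).mp h0
      have hNs : ((((b ^ s - 1) / (b - 1) : ℕ)) : ZMod p) = (s : ZMod p) := by
        rw [repunit_sum hb]
        push_cast
        simp [hb1']
      have hN0 : ((((b ^ s - 1) / (b - 1) : ℕ)) : ZMod p) = 0 :=
        (ZMod.natCast_eq_zero_iff _ _).mpr hpN
      have hps : p ∣ s := by
        rw [hN0] at hNs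
        exact (ZMod.natCast_eq_zero_iff _ _).mp hNs.symm
      have hpeq : p = s := (Nat.prime_dvd_prime_iff_eq pp hs).mp hps
      subst hpeq
      have : p ∣ Nat.gcd p (b - 1) := Nat.dvd_gcd dvd_rfl hpb1
      rw [hgcd] at this
      have := Nat.le_of_dvd one_pos this
      omega
    · exact h
  have hps : s ∣ p - 1 := by
    rw [← hord]
    exact orderOf_dvd_of_pow_eq_one (ZMod.pow_card_sub_one_eq_one hbne)
  refine ⟨hord, ?_⟩
  rintro rfl
  have := Nat.le_of_dvd (by norm_num) hps
  omega

open MulAction in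
lemma zdb_construction {N : ℕ} [NeZero N] (γ : (ZMod N)ˣ)
    (hA : ∀ h ∈ Subgroup.zpowers γ, h ≠ 1 → IsUnit (((h : (ZMod N)ˣ) : ZMod N) - 1)) :
    ∃ f : ZMod N → ZMod ((N - 1) / orderOf γ + 1),
      IsZDB f N ((N - 1) / orderOf γ + 1) (orderOf γ - 1) := by
  classical
  set d := orderOf γ with hd
  have hdpos : 0 < d := orderOf_pos γ
  set H : Subgroup (ZMod N)ˣ := Subgroup.zpowers γ with hH
  have hcardH : Nat.card H = d := Nat.card_zpowers γ
  -- differences of distinct elements of H are units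
  have hA' : ∀ h h' : H, h ≠ h' →
      IsUnit (((h : (ZMod N)ˣ) : ZMod N) - ((h' : (ZMod N)ˣ) : ZMod N)) := by
    intro h h' hne
    have hmem : ((h' : (ZMod N)ˣ)⁻¹ * (h : (ZMod N)ˣ)) ∈ H :=
      H.mul_mem (H.inv_mem h'.2) h.2
    have hne1 : ((h' : (ZMod N)ˣ)⁻¹ * (h : (ZMod N)ˣ)) ≠ 1 := by
      intro hcontra
      exact hne (Subtype.ext (inv_mul_eq_one.mp hcontra).symm)
    have hu := hA _ hmem hne1
    have heq : ((h : (ZMod N)ˣ) : ZMod N) - ((h' : (ZMod N)ˣ) : ZMod N)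
        = ((h' : (ZMod N)ˣ) : ZMod N) *
          ((((h' : (ZMod N)ˣ)⁻¹ * (h : (ZMod N)ˣ) : (ZMod N)ˣ) : ZMod N) - 1) := by
      rw [Units.val_mul, mul_sub, mul_one, ← mul_assoc, ← Units.val_mul, mul_inv_cancel,
        Units.val_one, one_mul]
    rw [heq]
    exact (Units.isUnit _).mul hu
  -- smul is multiplication
  have hsmul : ∀ (h : H) (x : ZMod N), h • x = ((h : (ZMod N)ˣ) : ZMod N) * x := fun h x => rfl
  -- free on nonzero elements
  have hfree : ∀ (x : ZMod N), x ≠ 0 → ∀ h h' : H, h • x = h' • x → h = h' := by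
    intro x hx h h' hhx
    by_contra hne
    obtain ⟨u, hu⟩ := hA' h h' hne
    apply hx
    have : (((h : (ZMod N)ˣ) : ZMod N) - ((h' : (ZMod N)ˣ) : ZMod N)) * x = 0 := by
      rw [sub_mul, sub_eq_zero]
      rw [hsmul, hsmul] at hhx
      exact hhx
    rw [← hu] at this
    calc x = ↑u⁻¹ * (↑u * x) := by rw [← mul_assoc, Units.inv_mul, one_mul]
    _ = 0 := by rw [this, mul_zero]
  -- orbit facts
  have horb0 : MulAction.orbit H (0 : ZMod N) = {0} := by
    ext y
    simp [MulAction.mem_orbit_iff, hsmul, eq_comm]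
  have horbcard : ∀ x : ZMod N, x ≠ 0 → Nat.card (MulAction.orbit H x) = d := by
    intro x hx
    have hinj : Function.Injective fun h : H => h • x := fun h h' hh => hfree x hx h h' hh
    have hOrb : MulAction.orbit H x = Set.range fun h : H => h • x := rfl
    rw [hOrb, Nat.card_range_of_injective hinj, hcardH]
  set Ω := orbitRel.Quotient H (ZMod N) with hΩ
  haveI : Finite Ω := Quotient.finite _
  haveI : Fintype Ω := Fintype.ofFinite _
  set z0 : Ω := Quotient.mk'' 0 with hz0
  have hcz0 : Nat.card (z0 : Ω).orbit = 1 := by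
    rw [hz0, orbitRel.Quotient.orbit_mk, horb0, Nat.card_coe_set_eq, Set.ncard_singleton]
  have hcne : ∀ ω : Ω, ω ≠ z0 → Nat.card ω.orbit = d := by
    intro ω hω
    rw [orbitRel.Quotient.orbit_eq_orbit_out ω Quotient.out_eq']
    refine horbcard _ (fun h0 => hω ?_)
    rw [← Quotient.out_eq' ω, h0, hz0]
  have hcount : N = (Fintype.card Ω - 1) * d + 1 := by
    have h1 : Fintype.card (ZMod N) = ∑ ω : Ω, Nat.card ω.orbit := by
      rw [Fintype.card_congr (MulAction.selfEquivSigmaOrbits' H (ZMod N)), Fintype.card_sigma]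
      simp [Nat.card_eq_fintype_card]
      rfl
    have h2 : ∑ ω : Ω, Nat.card ω.orbit = (Fintype.card Ω - 1) * d + 1 := by
      rw [← Finset.sum_erase_add _ _ (Finset.mem_univ z0), hcz0]
      congr 1
      rw [Finset.sum_congr rfl (fun ω hω => hcne ω (Finset.ne_of_mem_erase hω)),
        Finset.sum_const, smul_eq_mul, Finset.card_erase_of_mem (Finset.mem_univ z0),
        Finset.card_univ]
    rw [← ZMod.card N, h1, h2]
  have hΩpos : 0 < Fintype.card Ω := Fintype.card_pos_iff.mpr ⟨z0⟩
  have hm : (N - 1) / d + 1 = Fintype.card Ω := by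
    have hsub : N - 1 = (Fintype.card Ω - 1) * d := by omega
    rw [hsub, Nat.mul_div_cancel _ hdpos]
    omega
  haveI : NeZero ((N - 1) / d + 1) := ⟨Nat.succ_ne_zero _⟩
  let e : Ω ≃ ZMod ((N - 1) / d + 1) := Fintype.equivOfCardEq
    (by rw [ZMod.card, ← hm])
  refine ⟨fun x => e (Quotient.mk'' x), ?_, ?_, ?_⟩
  · rw [Nat.card_eq_fintype_card, ZMod.card]
  · have hsurj : Function.Surjective (fun x : ZMod N => e (Quotient.mk'' x)) :=
      e.surjective.comp Quotient.mk''_surjective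
    rw [hsurj.range_eq, Set.ncard_univ, Nat.card_eq_fintype_card, ZMod.card]
  · intro a ha
    have hfa : ∀ x y : ZMod N,
        (e (Quotient.mk'' x) = e (Quotient.mk'' y)) ↔ ∃ h : H, h • y = x := by
      intro x y
      rw [e.injective.eq_iff, Quotient.eq'']
      exact Iff.trans MulAction.orbitRel_apply MulAction.mem_orbit_iff
    set u : {h : H // h ≠ 1} → (ZMod N)ˣ := fun h =>
      (hA h.1.1 h.1.2 (fun hc => h.2 (OneMemClass.coe_eq_one.mp hc))).unit with hudef
    have huspec : ∀ h : {h : H // h ≠ 1}, (u h : ZMod N) = ((h.1 : (ZMod N)ˣ) : ZMod N) - 1 :=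
      fun h => IsUnit.unit_spec _
    set g : {h : H // h ≠ 1} → ZMod N := fun h => ((u h)⁻¹ : (ZMod N)ˣ) * a with hgdef
    have hset : {x : ZMod N | e (Quotient.mk'' (x + a)) = e (Quotient.mk'' x)} = Set.range g := by
      ext x
      simp only [Set.mem_setOf_eq, Set.mem_range, hfa]
      constructor
      · rintro ⟨h, hh⟩
        rw [hsmul] at hh
        have hne : h ≠ 1 := by
          rintro rfl
          simp only [OneMemClass.coe_one, Units.val_one, one_mul] at hh
          exact ha (left_eq_add.mp hh)
        have hx : (((h : (ZMod N)ˣ) : ZMod N) - 1) * x = a := by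
          rw [sub_mul, one_mul, hh]; ring
        refine ⟨⟨h, hne⟩, ?_⟩
        have hx' : (↑(u ⟨h, hne⟩) : ZMod N) * x = a := by rw [huspec]; exact hx
        show ((u ⟨h, hne⟩)⁻¹ : (ZMod N)ˣ) * a = x
        rw [← hx', Units.inv_mul_cancel_left]
      · rintro ⟨h, rfl⟩
        refine ⟨h.1, ?_⟩
        rw [hsmul]
        have e1 : ((h.1 : (ZMod N)ˣ) : ZMod N) = ↑(u h) + 1 := by rw [huspec h]; ring
        show ((h.1 : (ZMod N)ˣ) : ZMod N) * (((u h)⁻¹ : (ZMod N)ˣ) * a)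
            = ((u h)⁻¹ : (ZMod N)ˣ) * a + a
        calc ((h.1 : (ZMod N)ˣ) : ZMod N) * (((u h)⁻¹ : (ZMod N)ˣ) * a)
            = (↑(u h) : ZMod N) * (((u h)⁻¹ : (ZMod N)ˣ) * a)
              + ((u h)⁻¹ : (ZMod N)ˣ) * a := by rw [e1]; ring
          _ = a + ((u h)⁻¹ : (ZMod N)ˣ) * a := by rw [Units.mul_inv_cancel_left]
          _ = _ := add_comm _ _
    have hginj : Function.Injective g := by
      intro h h' hgh
      by_contra hne
      have hne' : h.1 ≠ h'.1 := fun hc => hne (Subtype.ext hc)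
      obtain ⟨v, hv⟩ := hA' h.1 h'.1 hne'
      apply ha
      have hx1 : (↑(u h) : ZMod N) * g h = a := by
        show (↑(u h) : ZMod N) * (((u h)⁻¹ : (ZMod N)ˣ) * a) = a
        exact Units.mul_inv_cancel_left _ _
      have hx2 : (↑(u h') : ZMod N) * g h = a := by
        show (↑(u h') : ZMod N) * (((u h)⁻¹ : (ZMod N)ˣ) * a) = a
        rw [show (((u h)⁻¹ : (ZMod N)ˣ) : ZMod N) * a
          = (((u h')⁻¹ : (ZMod N)ˣ) : ZMod N) * a from hgh]
        exact Units.mul_inv_cancel_left _ _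
      have e1 : ((h.1 : (ZMod N)ˣ) : ZMod N) = ↑(u h) + 1 := by rw [huspec h]; ring
      have e2 : ((h'.1 : (ZMod N)ˣ) : ZMod N) = ↑(u h') + 1 := by rw [huspec h']; ring
      have hz : (↑v : ZMod N) * g h = 0 := by
        calc (↑v : ZMod N) * g h
            = (↑(u h) : ZMod N) * g h - (↑(u h') : ZMod N) * g h := by rw [hv, e1, e2]; ring
          _ = a - a := by rw [hx1, hx2]
          _ = 0 := sub_self a
      have hgh0 : g h = 0 := by
        calc g h = (↑v⁻¹ : ZMod N) * ((↑v : ZMod N) * g h) := by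
              rw [← mul_assoc, Units.inv_mul, one_mul]
          _ = 0 := by rw [hz, mul_zero]
      rw [← hx1, hgh0, mul_zero]
    have hco : {x : ZMod N | (fun x => e (Quotient.mk'' x)) (x + a)
        = (fun x => e (Quotient.mk'' x)) x} = Set.range g := hset
    rw [hco, ← Nat.card_coe_set_eq, Nat.card_range_of_injective hginj]
    haveI : Fintype H := Fintype.ofFinite _
    rw [Nat.card_eq_fintype_card]
    have hcompl : Fintype.card {h : H // h ≠ 1} = Fintype.card H - 1 := by
      rw [Fintype.card_subtype_compl, Fintype.card_subtype_eq]
    rw [hcompl, ← Nat.card_eq_fintype_card, hcardH]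

/-- For `s` an odd prime, `b ≥ 2` with `gcd(s, b-1) = 1`, and
`N = (b^s - 1)/(b-1)`, every element of `⟨b⟩ + 1` is a unit of `Z_N`, and
there is an `(N, (N-1)/(2s)+1, 2s-1)` ZDB function on `Z_N`. -/
theorem zdb_mod_repunit (s b : ℕ) (hs : Nat.Prime s) (hsodd : Odd s) (hb : 2 ≤ b)
    (hgcd : Nat.gcd s (b - 1) = 1) :
    (∀ x ∈ Submonoid.powers ((b : ℕ) : ZMod ((b ^ s - 1) / (b - 1))),
      IsUnit (x + 1)) ∧
    ∃ f : ZMod ((b ^ s - 1) / (b - 1)) →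
        ZMod (((b ^ s - 1) / (b - 1) - 1) / (2 * s) + 1),
      IsZDB f ((b ^ s - 1) / (b - 1))
        (((b ^ s - 1) / (b - 1) - 1) / (2 * s) + 1) (2 * s - 1) := by
  have hs3 : 3 ≤ s := by
    have h2 := hs.two_le
    rcases Nat.lt_or_ge s 3 with h | h
    · interval_cases s
      · exact absurd hsodd (by decide)
    · exact h
  have hb1 : 1 ≤ b ^ s := Nat.one_le_pow _ _ (by omega)
  set N := (b ^ s - 1) / (b - 1) with hNdef
  have hN : (b - 1) * N = b ^ s - 1 := repunit_mul hb
  have hNlb : b + 1 ≤ N := by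
    obtain ⟨c, rfl⟩ : ∃ c, b = c + 2 := ⟨b - 2, by omega⟩
    have h2s : (c + 2) ^ 2 ≤ (c + 2) ^ s := Nat.pow_le_pow_right (by omega) (by omega)
    have hsq : (c + 2) ^ 2 = c * c + 4 * c + 4 := by ring
    by_contra hcon
    push_neg at hcon
    have hle : N ≤ c + 2 := by omega
    have hmul : (c + 2 - 1) * N ≤ (c + 2 - 1) * (c + 2) := Nat.mul_le_mul_left _ hle
    rw [hN] at hmul
    have : (c + 2 - 1) * (c + 2) = c * c + 3 * c + 2 := by
      have : c + 2 - 1 = c + 1 := by omega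
      rw [this]; ring
    omega
  haveI : NeZero N := ⟨by omega⟩
  -- coprimality
  have hcop_add : ∀ i : ℕ, Nat.Coprime (b ^ i + 1) N := by
    intro i
    by_contra hc
    obtain ⟨p, pp, hp1, hp2⟩ := Nat.Prime.not_coprime_iff_dvd.mp hc
    haveI := Fact.mk pp
    obtain ⟨hord, hpne2⟩ := key_order hs hsodd hb hgcd pp hp2
    have h0 : ((b ^ i + 1 : ℕ) : ZMod p) = 0 :=
      (ZMod.natCast_eq_zero_iff _ _).mpr hp1
    push_cast at h0
    have hbi : (b : ZMod p) ^ i = -1 := eq_neg_of_add_eq_zero_left h0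
    have h2i : (b : ZMod p) ^ (2 * i) = 1 := by
      rw [two_mul, pow_add, hbi]; ring
    have hdvd2i : s ∣ 2 * i := hord ▸ orderOf_dvd_of_pow_eq_one h2i
    have hdvdi : s ∣ i :=
      Nat.Coprime.dvd_of_dvd_mul_left hsodd.coprime_two_right hdvd2i
    have hbi1 : (b : ZMod p) ^ i = 1 := by
      obtain ⟨k, rfl⟩ := hdvdi
      have hbs : (b : ZMod p) ^ s = 1 := by
        rw [← hord]; exact pow_orderOf_eq_one _
      rw [pow_mul, hbs, one_pow]
    rw [hbi1] at hbi
    have h2 : ((2 : ℕ) : ZMod p) = 0 := by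
      push_cast
      linear_combination hbi
    exact hpne2 ((Nat.prime_dvd_prime_iff_eq pp Nat.prime_two).mp
      ((ZMod.natCast_eq_zero_iff _ _).mp h2))
  have hcop_sub : ∀ i : ℕ, 0 < i → i < s → Nat.Coprime (b ^ i - 1) N := by
    intro i hi0 his
    by_contra hc
    obtain ⟨p, pp, hp1, hp2⟩ := Nat.Prime.not_coprime_iff_dvd.mp hc
    haveI := Fact.mk pp
    obtain ⟨hord, hpne2⟩ := key_order hs hsodd hb hgcd pp hp2
    have hbi1 : 1 ≤ b ^ i := Nat.one_le_pow _ _ (by omega)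
    have h0 : ((b ^ i - 1 : ℕ) : ZMod p) = 0 :=
      (ZMod.natCast_eq_zero_iff _ _).mpr hp1
    rw [Nat.cast_sub hbi1] at h0
    push_cast at h0
    have hbi : (b : ZMod p) ^ i = 1 := sub_eq_zero.mp h0
    have hdvdi : s ∣ i := hord ▸ orderOf_dvd_of_pow_eq_one hbi
    have := Nat.le_of_dvd hi0 hdvdi
    omega
  -- unit facts in ZMod N
  have hbs : (b : ZMod N) ^ s = 1 := by
    have hdvd : N ∣ b ^ s - 1 :=
      Nat.div_dvd_of_dvd (by simpa using Nat.sub_dvd_pow_sub_pow b 1 s)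
    have h0 : ((b ^ s - 1 : ℕ) : ZMod N) = 0 :=
      (ZMod.natCast_eq_zero_iff _ _).mpr hdvd
    rw [Nat.cast_sub hb1] at h0
    push_cast at h0
    exact sub_eq_zero.mp h0
  have hunit_add : ∀ i : ℕ, IsUnit ((b : ZMod N) ^ i + 1) := by
    intro i
    have hc : ((b ^ i + 1 : ℕ) : ZMod N) = (b : ZMod N) ^ i + 1 := by push_cast; ring
    rw [← hc]
    exact (ZMod.isUnit_iff_coprime _ _).mpr (hcop_add i)
  have hunit_sub : ∀ i : ℕ, 0 < i → i < s → IsUnit ((b : ZMod N) ^ i - 1) := by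
    intro i h1 h2
    have hbi : 1 ≤ b ^ i := Nat.one_le_pow _ _ (by omega)
    have hc : ((b ^ i - 1 : ℕ) : ZMod N) = (b : ZMod N) ^ i - 1 := by
      rw [Nat.cast_sub hbi]; push_cast; ring
    rw [← hc]
    exact (ZMod.isUnit_iff_coprime _ _).mpr (hcop_sub i h1 h2)
  have hpow_mod : ∀ n : ℕ, (b : ZMod N) ^ n = (b : ZMod N) ^ (n % s) := by
    intro n
    conv_lhs => rw [← Nat.div_add_mod n s]
    rw [pow_add, pow_mul, hbs, one_pow, one_mul]
  constructor
  · intro x hx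
    obtain ⟨i, rfl⟩ := (Submonoid.mem_powers_iff _ _).mp hx
    exact hunit_add i
  · -- the unit b
    have hbunit : IsUnit (b : ZMod N) := by
      refine IsUnit.of_mul_eq_one (a := (b : ZMod N)) ((b : ZMod N) ^ (s - 1)) ?_
      rw [← pow_succ']
      rw [show s - 1 + 1 = s by omega]
      exact hbs
    set bu := hbunit.unit with hbu
    have hbuval : (bu : ZMod N) = (b : ZMod N) := hbunit.unit_spec
    have hbune : (b : ZMod N) ≠ 1 := by
      intro h1
      have h0 : ((b - 1 : ℕ) : ZMod N) = 0 := by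
        rw [Nat.cast_sub (by omega : 1 ≤ b)]; simp [h1]
      have hdvd := (ZMod.natCast_eq_zero_iff _ _).mp h0
      have := Nat.le_of_dvd (by omega) hdvd
      omega
    have hordb : orderOf bu = s := by
      have h1 : orderOf (b : ZMod N) = s := by
        have hdvd : orderOf (b : ZMod N) ∣ s := orderOf_dvd_of_pow_eq_one hbs
        rcases Nat.Prime.eq_one_or_self_of_dvd hs _ hdvd with h | h
        · exact absurd (orderOf_eq_one_iff.mp h) hbune
        · exact h
      rwa [← hbuval, orderOf_units] at h1
    have hm1 : (-1 : (ZMod N)ˣ) ≠ 1 := by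
      intro h
      have hval : ((-1 : (ZMod N)ˣ) : ZMod N) = 1 := by rw [h, Units.val_one]
      rw [Units.val_neg, Units.val_one] at hval
      have h2 : ((2 : ℕ) : ZMod N) = 0 := by
        push_cast
        linear_combination -hval
      have hdvd := (ZMod.natCast_eq_zero_iff _ _).mp h2
      have := Nat.le_of_dvd (by norm_num) hdvd
      omega
    have hordm1 : orderOf (-1 : (ZMod N)ˣ) = 2 := by
      haveI := Fact.mk Nat.prime_two
      exact orderOf_eq_prime (by simp) hm1
    have hord : orderOf ((-1 : (ZMod N)ˣ) * bu) = 2 * s := by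
      rw [(Commute.all (-1 : (ZMod N)ˣ) bu).orderOf_mul_eq_mul_orderOf_of_coprime
        (by rw [hordm1, hordb]; exact hsodd.coprime_two_left), hordm1, hordb]
    have hγval : (((-1 : (ZMod N)ˣ) * bu : (ZMod N)ˣ) : ZMod N) = -(b : ZMod N) := by
      rw [Units.val_mul, Units.val_neg, Units.val_one, hbuval]
      ring
    have hA : ∀ h ∈ Subgroup.zpowers ((-1 : (ZMod N)ˣ) * bu), h ≠ 1 →
        IsUnit ((h : ZMod N) - 1) := by
      intro h hmem hne
      have hfin : IsOfFinOrder ((-1 : (ZMod N)ˣ) * bu) :=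
        orderOf_pos_iff.mp (by rw [hord]; omega)
      obtain ⟨n, hn⟩ := (Submonoid.mem_powers_iff _ _).mp
        (hfin.mem_powers_iff_mem_zpowers.mpr hmem)
      have hval : (h : ZMod N) = (-(b : ZMod N)) ^ n := by
        rw [← hn, Units.val_pow_eq_pow_val, hγval]
      rcases Nat.even_or_odd n with he | ho
      · rw [hval, he.neg_pow, hpow_mod n]
        rcases Nat.eq_zero_or_pos (n % s) with h0 | hpos
        · exfalso
          apply hne
          apply Units.ext
          rw [hval, he.neg_pow, hpow_mod n, h0, pow_zero, Units.val_one]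
        · exact hunit_sub _ hpos (Nat.mod_lt _ (by omega))
      · rw [hval, ho.neg_pow]
        have heq : -((b : ZMod N) ^ n) - 1 = -((b : ZMod N) ^ n + 1) := by ring
        rw [heq]
        exact (hunit_add n).neg
    have hmain := zdb_construction ((-1 : (ZMod N)ˣ) * bu) hA
    rw [hord] at hmain
    exact hmain
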